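/- For the scalar system x(t+1) = x(t) + w(t) + u(t) with x(0) = 0, where the controller has delayed access to disturbances — u(t) may depend only on w(0), …, w(t−T−1) for a fixed delay T ≥ 1 — the worst-case error sup_{‖w‖_∞ ≤ 1} ‖x‖_∞ is at least T: for any such causal delayed controller there exists an admissible disturbance making sup_t |x(t)| ≥ T. -/
import Mathlib


/-- Closed-loop trajectory: `x(0)=0`, `x(t+1)=x(t)+w(t)+u(t)` where the control
`u(t) = K t (w(0),…,w(t−T−1))` has delayed access to the disturbance. -/
def trajCtrl (T : ℕ) (K : (t : ℕ) → (Fin (t - T) → ℝ) → ℝ) (w : ℕ → ℝ) : ℕ → ℝ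
  | 0 => 0
  | t + 1 => trajCtrl T K w t + w t + K t (fun i => w i)

lemma trajCtrl_sum (T : ℕ) (K : (t : ℕ) → (Fin (t - T) → ℝ) → ℝ) (w : ℕ → ℝ) :
    ∀ n, trajCtrl T K w n = ∑ t ∈ Finset.range n, (w t + K t (fun i => w i))
  | 0 => by simp [trajCtrl]
  | n + 1 => by
    rw [trajCtrl, trajCtrl_sum T K w n, Finset.sum_range_succ]
    ring

/-- Any controller with delay `T ≥ 1` suffers worst-case error at least `T`:
there is an admissible disturbance driving the state to magnitude `≥ T`. -/
theorem delay_error_lower_bound (T : ℕ) (hT : 1 ≤ T)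
    (K : (t : ℕ) → (Fin (t - T) → ℝ) → ℝ) :
    ∃ w : ℕ → ℝ, (∀ t, |w t| ≤ 1) ∧ ∃ t, (T : ℝ) ≤ |trajCtrl T K w t| := by
  set S : ℝ := ∑ t ∈ Finset.range T, K t (fun i => (1 : ℝ)) with hSdef
  by_cases hS : 0 ≤ S
  · refine ⟨fun _ => 1, fun t => by norm_num, T, ?_⟩
    have h : trajCtrl T K (fun _ => 1) T = T + S := by
      rw [trajCtrl_sum, Finset.sum_add_distrib, hSdef]
      simp
    rw [h, abs_of_nonneg (by positivity)]
    linarith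
  · push_neg at hS
    refine ⟨fun _ => -1, fun t => by norm_num, T, ?_⟩
    have h : trajCtrl T K (fun _ => -1) T = -T + S := by
      rw [trajCtrl_sum, Finset.sum_add_distrib, hSdef]
      have : ∀ t ∈ Finset.range T, K t (fun i => (-1 : ℝ)) = K t (fun i => (1 : ℝ)) := by
        intro t ht
        rw [Finset.mem_range] at ht
        congr 1
        funext i
        exact absurd i.isLt (by omega)
      rw [Finset.sum_congr rfl this]
      simp
    rw [h]
    have hTpos : (0:ℝ) < T := by exact_mod_cast hT
    rw [abs_of_nonpos (by linarith)]
    linarith
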